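/- arXiv:1709.08916 — 9 statements merged into one kernel-verified Lean document; each statement's English description precedes it below -/
import Mathlib

section
/- If M is a finitely generated monoid and A is a finite M-act, then A is finitely presented. -/
/-- A right act of a monoid `M` on a type `A`. -/
structure RActOn (M : Type*) [Monoid M] (A : Type*) where
  act : A → M → A
  act_one : ∀ a, act a 1 = a
  act_mul : ∀ a m n, act a (m * n) = act (act a m) n

namespace RActOn

variable {M : Type*} [Monoid M]

/-- `f` is a homomorphism of `M`-acts. -/
def IsHom {A B : Type*} (α : RActOn M A) (β : RActOn M B) (f : A → B) : Prop :=
  ∀ a m, f (α.act a m) = β.act (f a) m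

/-- The two acts are isomorphic. -/
def Isomorphic {A B : Type*} (α : RActOn M A) (β : RActOn M B) : Prop :=
  ∃ f : A → B, IsHom α β f ∧ Function.Bijective f

/-- `ρ` is an `M`-act congruence on `A`. -/
def IsCong {A : Type*} (α : RActOn M A) (ρ : A → A → Prop) : Prop :=
  Equivalence ρ ∧ ∀ a b m, ρ a b → ρ (α.act a m) (α.act b m)

/-- The smallest congruence containing the relation `X`. -/
def congClosure {A : Type*} (α : RActOn M A) (X : A → A → Prop) : A → A → Prop :=
  fun a b => ∀ ρ : A → A → Prop, IsCong α ρ → (∀ x y, X x y → ρ x y) → ρ a b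

/-- The free `M`-act on a set `X`: carrier `X × M`, action `(x, m) · n = (x, m * n)`. -/
def free (M : Type*) [Monoid M] (X : Type*) : RActOn M (X × M) where
  act p n := (p.1, p.2 * n)
  act_one := by intro a; simp
  act_mul := by intro a m n; simp [mul_assoc]

/-- The `M`-act `α` is defined by the presentation `⟨X | R⟩`. -/
def DefinedBy {A : Type*} (α : RActOn M A) (X : Type*)
    (R : Set ((X × M) × (X × M))) : Prop :=
  ∃ f : X × M → A, Function.Surjective f ∧ IsHom (free M X) α f ∧
    ∀ u v : X × M, f u = f v ↔ congClosure (free M X) (fun a b => (a, b) ∈ R) u v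

/-- The `M`-act `α` is finitely presented. -/
def FinitelyPresented {A : Type*} (α : RActOn M A) : Prop :=
  ∃ (X : Type) (_ : Finite X) (R : Set ((X × M) × (X × M))),
    R.Finite ∧ DefinedBy α X R

/-- The `M`-act `α` is finitely generated. -/
def FinitelyGenerated {A : Type*} (α : RActOn M A) : Prop :=
  ∃ U : Set A, U.Finite ∧ ∀ a : A, ∃ u ∈ U, ∃ m : M, α.act u m = a

/-- `B` is a subact of `A`. -/
def IsSubact {A : Type*} (α : RActOn M A) (B : Set A) : Prop :=
  ∀ b ∈ B, ∀ m : M, α.act b m ∈ B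

/-- The subset `S` is generated, as a subact, by `U ⊆ S`. -/
def FGSet {A : Type*} (α : RActOn M A) (S : Set A) : Prop :=
  ∃ U ⊆ S, U.Finite ∧ ∀ a ∈ S, ∃ u ∈ U, ∃ m : M, α.act u m = a

/-- The act induced on a subact. -/
def subAct {A : Type*} (α : RActOn M A) (B : Set A) (hB : IsSubact α B) :
    RActOn M B where
  act b m := ⟨α.act b m, hB b b.2 m⟩
  act_one := by intro a; ext; simp [α.act_one]
  act_mul := by intro a m n; ext; simp [α.act_mul]

/-- The Rees congruence relation determined by `B`. -/
def reesRel {A : Type*} (B : Set A) : A → A → Prop :=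
  fun a b => a = b ∨ (a ∈ B ∧ b ∈ B)

/-- The Rees quotient act `A / B`. -/
def reesAct {A : Type*} (α : RActOn M A) (B : Set A) (hB : IsSubact α B) :
    RActOn M (Quot (reesRel B)) where
  act q m := Quot.lift (fun a => Quot.mk _ (α.act a m))
    (by
      intro a b h
      apply Quot.sound
      rcases h with h | ⟨ha, hb⟩
      · exact Or.inl (by rw [h])
      · exact Or.inr ⟨hB a ha m, hB b hb m⟩) q
  act_one := by
    intro q
    induction q using Quot.ind with
    | _ a => simp [α.act_one]
  act_mul := by
    intro q m n
    induction q using Quot.ind with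
    | _ a => simp [α.act_mul]

/-- The trivial one-element `M`-act. -/
def trivAct (M : Type*) [Monoid M] : RActOn M PUnit where
  act _ _ := PUnit.unit
  act_one := by intro a; rfl
  act_mul := by intro a m n; rfl

/-- The disjoint union of two `M`-acts. -/
def sumAct {A B : Type*} (α : RActOn M A) (β : RActOn M B) : RActOn M (A ⊕ B) where
  act x m := Sum.elim (fun a => Sum.inl (α.act a m)) (fun b => Sum.inr (β.act b m)) x
  act_one := by intro x; cases x <;> simp [α.act_one, β.act_one]
  act_mul := by intro x m n; cases x <;> simp [α.act_mul, β.act_mul]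

/-- The `M`-act `M` itself, by right multiplication. -/
def selfAct (M : Type*) [Monoid M] : RActOn M M where
  act a m := a * m
  act_one := by intro a; simp
  act_mul := by intro a m n; simp [mul_assoc]

end RActOn

section Proof

open RActOn

private theorem congClosure_isCong' {M : Type*} [Monoid M] {A : Type*} (α : RActOn M A)
    (X : A → A → Prop) : IsCong α (congClosure α X) := by
  refine ⟨⟨?_, ?_, ?_⟩, ?_⟩
  · intro a ρ hρ _; exact hρ.1.refl a
  · intro a b h ρ hρ hX; exact hρ.1.symm (h ρ hρ hX)
  · intro a b c h1 h2 ρ hρ hX; exact hρ.1.trans (h1 ρ hρ hX) (h2 ρ hρ hX)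
  · intro a b m h ρ hρ hX; exact hρ.2 a b m (h ρ hρ hX)

end Proof



open RActOn in
/-- If `M` is a finitely generated monoid and `A` is a finite `M`-act,
then `A` is finitely presented. -/
theorem finite_act_finitely_presented {M : Type*} [Monoid M]
    (hM : ∃ Z : Set M, Z.Finite ∧ Submonoid.closure Z = ⊤)
    {A : Type*} [Finite A] (α : RActOn M A) :
    FinitelyPresented α := by
  obtain ⟨Z, hZfin, hZtop⟩ := hM
  obtain ⟨n, ⟨e⟩⟩ := Finite.exists_equiv_fin A
  set f : Fin n × M → A := fun p => α.act (e.symm p.1) p.2 with hf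
  set Rset : Set ((Fin n × M) × (Fin n × M)) :=
    (fun p : Fin n × M => ((p.1, p.2), (e (α.act (e.symm p.1) p.2), (1:M)))) ''
      (Set.univ ×ˢ Z) with hR
  refine ⟨Fin n, inferInstance, Rset, (Set.finite_univ.prod hZfin).image _, f, ?_, ?_, ?_⟩
  · intro a; exact ⟨(e a, 1), by simp [hf, α.act_one]⟩
  · intro p m; simp [hf, free, α.act_mul]
  · set Xr : (Fin n × M) → (Fin n × M) → Prop := fun a b => (a, b) ∈ Rset with hXr
    set C := congClosure (free M (Fin n)) Xr with hC
    have hCcong : IsCong (free M (Fin n)) C := congClosure_isCong' _ _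
    have hCX : ∀ u v, Xr u v → C u v := fun u v h ρ hρ hX => hX u v h
    -- key lemma
    have key : ∀ m : M, ∀ x : Fin n, C (x, m) (e (α.act (e.symm x) m), 1) := by
      intro m
      have hm : m ∈ Submonoid.closure Z := hZtop ▸ Submonoid.mem_top m
      induction hm using Submonoid.closure_induction with
      | mem z hz =>
        intro x
        exact hCX _ _ ⟨(x, z), ⟨Set.mem_univ _, hz⟩, rfl⟩
      | one =>
        intro x
        have : (e (α.act (e.symm x) 1), (1:M)) = (x, 1) := by simp [α.act_one]
        rw [this]
        exact hCcong.1.refl _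
      | mul m₁ m₂ hm₁ hm₂ ih₁ ih₂ =>
        intro x
        have h1 : C (x, m₁ * m₂) (e (α.act (e.symm x) m₁), m₂) := by
          have := hCcong.2 _ _ m₂ (ih₁ x)
          simpa [free] using this
        have h2 := ih₂ (e (α.act (e.symm x) m₁))
        rw [Equiv.symm_apply_apply] at h2
        rw [← α.act_mul] at h2
        exact hCcong.1.trans h1 h2
    intro u v
    constructor
    · intro huv
      have h1 := key u.2 u.1
      have h2 := key v.2 v.1
      have : α.act (e.symm u.1) u.2 = α.act (e.symm v.1) v.2 := huv
      rw [this] at h1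
      exact hCcong.1.trans h1 (hCcong.1.symm h2)
    · intro h
      refine h (fun u v => f u = f v) ⟨⟨fun _ => rfl, fun h => h.symm, fun h1 h2 => h1.trans h2⟩, ?_⟩ ?_
      · intro a b m hab
        show f ((free M (Fin n)).act a m) = f ((free M (Fin n)).act b m)
        simp only [hf, free, α.act_mul]
        rw [show α.act (e.symm a.1) a.2 = α.act (e.symm b.1) b.2 from hab]
      · rintro u v ⟨p, _, hp⟩
        obtain ⟨h1, h2⟩ := Prod.mk.injEq .. ▸ hp
        subst h1 h2
        simp [hf, α.act_one]
end

section
/- Let M = X* be the free monoid on an infinite set X. Then the trivial M-act {0} is not finitely presented. -/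
open RActOn in
/-- If `M` is the free monoid on an infinite set `X`, then the trivial
`M`-act is not finitely presented. -/
theorem trivial_act_not_fp_free_monoid {X : Type*} [Infinite X] :
    ¬ FinitelyPresented (trivAct (FreeMonoid X)) := by

  rintro ⟨Y, hY, R, hRfin, f, hsurj, hhom, hiff⟩
  -- The set of letters occurring in R is finite; pick a fresh letter x.
  have hSfin : (⋃ r ∈ R, ({c | c ∈ FreeMonoid.toList r.1.2} ∪
      {c | c ∈ FreeMonoid.toList r.2.2} : Set X)).Finite :=
    hRfin.biUnion (fun r _ => (List.finite_toSet _).union (List.finite_toSet _))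
  obtain ⟨x, hx⟩ := hSfin.infinite_compl.nonempty
  -- The invariant: whether x occurs in the word component.
  set P : Y × FreeMonoid X → Prop := fun p => x ∈ FreeMonoid.toList p.2 with hP
  set ρ : Y × FreeMonoid X → Y × FreeMonoid X → Prop := fun a b => P a ↔ P b with hρ
  have hmul : ∀ (m n : FreeMonoid X), x ∈ FreeMonoid.toList (m * n) ↔
      x ∈ FreeMonoid.toList m ∨ x ∈ FreeMonoid.toList n := by
    intro m n
    simp [FreeMonoid.toList_mul, List.mem_append]
  have hcong : IsCong (free (FreeMonoid X) Y) ρ := by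
    constructor
    · exact ⟨fun a => Iff.rfl, fun h => h.symm, fun h h' => h.trans h'⟩
    · intro a b m h
      simp only [hρ, hP, free, hmul] at h ⊢
      tauto
  have hR : ∀ u v, (u, v) ∈ R → ρ u v := by
    intro u v huv
    have h1 : x ∉ FreeMonoid.toList u.2 := by
      intro hmem
      exact hx (Set.mem_biUnion huv (Or.inl hmem))
    have h2 : x ∉ FreeMonoid.toList v.2 := by
      intro hmem
      exact hx (Set.mem_biUnion huv (Or.inr hmem))
    simp only [hρ, hP]
    tauto
  obtain ⟨⟨y, m⟩, -⟩ := hsurj PUnit.unit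
  have hfeq : f (y, 1) = f (y, FreeMonoid.of x) := rfl
  have hcc := (hiff (y, 1) (y, FreeMonoid.of x)).mp hfeq
  have := hcc ρ hcong hR
  simp only [hρ, hP] at this
  simp [FreeMonoid.toList_one, FreeMonoid.toList_of] at this
end

section
/- Let M be a monoid. The trivial M-act {0} is finitely presented if and only if there exists a finitely presented M-act A containing a zero element (an element 0 ∈ A with 0m = 0 for all m ∈ M). -/
open RActOn

section Aux
variable {M : Type*} [Monoid M]

/-- Transfer finite presentability of the trivial act across universes. -/
theorem trivFP_transfer (h : FinitelyPresented (trivAct M : RActOn M PUnit.{v+1})) :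
    FinitelyPresented (trivAct M : RActOn M PUnit.{w+1}) := by
  obtain ⟨X, hX, R, hR, f, hs, -, hk⟩ := h
  obtain ⟨p, -⟩ := hs PUnit.unit
  refine ⟨X, hX, R, hR, fun _ => PUnit.unit, fun _ => ⟨p, rfl⟩, fun a m => rfl, ?_⟩
  intro u v
  constructor
  · intro _
    exact (hk u v).mp (Subsingleton.elim _ _)
  · intro _; rfl

/-- If there is a finitely presented act with a zero, the trivial act is
finitely presented. -/
theorem trivFP_of_fp_with_zero {A : Type*} (α : RActOn M A) (z : A)
    (hz : ∀ m : M, α.act z m = z) (hfp : FinitelyPresented α) :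
    FinitelyPresented (trivAct M : RActOn M PUnit.{v+1}) := by
  obtain ⟨X, hX, R, hR, f, hs, hhom, hk⟩ := hfp
  obtain ⟨p, hp⟩ := hs z
  refine ⟨X, hX, R ∪ (Set.range fun x : X => ((x, (1:M)), p)), hR.union (Set.finite_range _),
    fun _ => PUnit.unit, fun _ => ⟨p, rfl⟩, fun a m => rfl, ?_⟩
  -- the congruence closure of the enlarged relation set is the full relation
  intro u v
  constructor
  · intro _
    intro ρ hcong hR'
    -- key: every element is related to `p`
    have key : ∀ q : X × M, ρ q p := by
      rintro ⟨x, m⟩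
      have h1 : ρ (x, (1:M)) p := hR' _ _ (Or.inr ⟨x, rfl⟩)
      have h2 : ρ (x, 1 * m) (p.1, p.2 * m) := hcong.2 _ _ m h1
      rw [one_mul] at h2
      have h3 : f (p.1, p.2 * m) = f p := by
        have := hhom p m
        simp only [free] at this
        rw [this, hp, hz]
      have h4 : ρ (p.1, p.2 * m) p :=
        (hk _ _).mp h3 ρ hcong (fun a b hab => hR' a b (Or.inl hab))
      exact hcong.1.trans h2 h4
    exact hcong.1.trans (key u) (hcong.1.symm (key v))
  · intro _; rfl

end Aux

open RActOn in
/-- The trivial `M`-act is finitely presented iff there exists a finitely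
presented `M`-act containing a zero element. -/
theorem trivial_fp_iff_exists_fp_with_zero {M : Type*} [Monoid M] :
    FinitelyPresented (trivAct M) ↔
      ∃ (A : Type u) (α : RActOn M A) (z : A),
        (∀ m : M, α.act z m = z) ∧ FinitelyPresented α := by

  constructor
  · intro h
    exact ⟨PUnit, trivAct M, PUnit.unit, fun m => rfl, trivFP_transfer h⟩
  · rintro ⟨A, α, z, hz, hfp⟩
    exact trivFP_of_fp_with_zero α z hz hfp
end

section
/- Let M be a monoid and A a finitely presented M-act with a presentation ⟨X | S⟩ where X is finite (S possibly infinite). Then there exists a finite subset S′ ⊆ S such that A is defined by the presentation ⟨X | S′⟩. -/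
namespace RActOn

variable {M : Type*} [Monoid M]

/-! ### Auxiliary lemmas -/

lemma congClosure_isCong {A : Type*} (α : RActOn M A) (X : A → A → Prop) :
    IsCong α (congClosure α X) := by
  refine ⟨⟨?_, ?_, ?_⟩, ?_⟩
  · intro a ρ hρ hX; exact hρ.1.refl a
  · intro a b h ρ hρ hX; exact hρ.1.symm (h ρ hρ hX)
  · intro a b c h1 h2 ρ hρ hX; exact hρ.1.trans (h1 ρ hρ hX) (h2 ρ hρ hX)
  · intro a b m h ρ hρ hX; exact hρ.2 a b m (h ρ hρ hX)

lemma le_congClosure' {A : Type*} (α : RActOn M A) (X : A → A → Prop) {a b : A}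
    (h : X a b) : congClosure α X a b := fun ρ _ hX => hX a b h

lemma congClosure_mono' {A : Type*} (α : RActOn M A) {X Y : A → A → Prop}
    (hXY : ∀ a b, X a b → Y a b) {a b : A} (h : congClosure α X a b) :
    congClosure α Y a b := fun ρ hρ hY => h ρ hρ (fun x y hx => hY x y (hXY x y hx))

/-- Kernel of a homomorphism is a congruence. -/
lemma ker_isCong {A B : Type*} (α : RActOn M A) (β : RActOn M B) (f : A → B)
    (hf : IsHom α β f) : IsCong α (fun a b => f a = f b) := by
  refine ⟨⟨fun a => rfl, fun h => h.symm, fun h1 h2 => h1.trans h2⟩, ?_⟩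
  intro a b m h
  rw [hf a m, hf b m, h]

/-- Pullback of a congruence along a homomorphism is a congruence. -/
lemma pullback_isCong {A B : Type*} (α : RActOn M A) (β : RActOn M B) (f : A → B)
    (hf : IsHom α β f) (ρ : B → B → Prop) (hρ : IsCong β ρ) :
    IsCong α (fun a b => ρ (f a) (f b)) := by
  refine ⟨⟨fun a => hρ.1.refl _, fun h => hρ.1.symm h, fun h1 h2 => hρ.1.trans h1 h2⟩, ?_⟩
  intro a b m h
  rw [hf a m, hf b m]
  exact hρ.2 _ _ m h

/-- Compactness: if `a ~ b` in the congruence closure of `S`, then already in the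
closure of a finite subset of `S`. -/
lemma congClosure_compact {A : Type*} (α : RActOn M A) (S : Set (A × A)) {a b : A}
    (h : congClosure α (fun x y => (x, y) ∈ S) a b) :
    ∃ F ⊆ S, F.Finite ∧ congClosure α (fun x y => (x, y) ∈ F) a b := by
  refine h (fun a b => ∃ F ⊆ S, F.Finite ∧ congClosure α (fun x y => (x, y) ∈ F) a b)
    ⟨⟨?_, ?_, ?_⟩, ?_⟩ ?_
  · intro a
    exact ⟨∅, by simp, Set.finite_empty, (congClosure_isCong α _).1.refl a⟩
  · rintro a b ⟨F, hFS, hFfin, hF⟩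
    exact ⟨F, hFS, hFfin, (congClosure_isCong α _).1.symm hF⟩
  · rintro a b c ⟨F, hFS, hFfin, hF⟩ ⟨G, hGS, hGfin, hG⟩
    have h1 := congClosure_mono' α (Y := fun x y => (x, y) ∈ F ∪ G)
      (fun x y hx => Set.mem_union_left _ hx) hF
    have h2 := congClosure_mono' α (Y := fun x y => (x, y) ∈ F ∪ G)
      (fun x y hx => Set.mem_union_right _ hx) hG
    exact ⟨F ∪ G, Set.union_subset hFS hGS, hFfin.union hGfin,
      (congClosure_isCong α _).1.trans h1 h2⟩
  · rintro a b m ⟨F, hFS, hFfin, hF⟩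
    exact ⟨F, hFS, hFfin, (congClosure_isCong α _).2 a b m hF⟩
  · intro x y hxy
    exact ⟨{(x, y)}, by simpa using hxy, Set.finite_singleton _,
      le_congClosure' α _ (by simp)⟩

end RActOn


open RActOn in
/-- If `A` is finitely presented and has a presentation `⟨X | S⟩` with `X` finite,
then some finite `S′ ⊆ S` already defines `A`. -/
theorem finite_subpresentation {M : Type*} [Monoid M] {A : Type*} (α : RActOn M A)
    {X : Type*} [Finite X] (S : Set ((X × M) × (X × M)))
    (hS : DefinedBy α X S) (hfp : FinitelyPresented α) :
    ∃ S' ⊆ S, S'.Finite ∧ DefinedBy α X S' := by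
  obtain ⟨f, hf_surj, hf_hom, hf_ker⟩ := hS
  obtain ⟨Y, hYfin, R, hRfin, g, hg_surj, hg_hom, hg_ker⟩ := hfp
  -- choose preimages
  choose u hu using fun y : Y => hf_surj (g (y, 1))
  choose v hv using fun x : X => hg_surj (f (x, 1))
  -- h : free Y → free X with f ∘ h = g
  set h : Y × M → X × M := fun p => ((u p.1).1, (u p.1).2 * p.2) with hh_def
  have hh_hom : IsHom (free M Y) (free M X) h := by
    intro p m; simp [hh_def, free, mul_assoc]
  have hfh : ∀ p : Y × M, f (h p) = g p := by
    rintro ⟨y, m⟩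
    have h1 : h (y, m) = (free M X).act (u y) m := rfl
    rw [h1, hf_hom, hu, ← hg_hom]
    simp [free]
  -- k : free X → free Y with g ∘ k = f
  set k : X × M → Y × M := fun p => ((v p.1).1, (v p.1).2 * p.2) with hk_def
  have hgk : ∀ p : X × M, g (k p) = f p := by
    rintro ⟨x, m⟩
    have h1 : k (x, m) = (free M Y).act (v x) m := rfl
    rw [h1, hg_hom, hv, ← hf_hom]
    simp [free]
  -- for each relation in R, pick a finite witnessing subset of S
  have hRw : ∀ r : (Y × M) × (Y × M), ∃ F ⊆ S, F.Finite ∧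
      (r ∈ R → congClosure (free M X) (fun a b => (a, b) ∈ F) (h r.1) (h r.2)) := by
    intro r
    by_cases hr : r ∈ R
    · have : f (h r.1) = f (h r.2) := by
        rw [hfh, hfh, (hg_ker r.1 r.2).2 (le_congClosure' _ _ hr)]
      obtain ⟨F, hFS, hFfin, hF⟩ := congClosure_compact (free M X) S
        ((hf_ker _ _).1 this)
      exact ⟨F, hFS, hFfin, fun _ => hF⟩
    · exact ⟨∅, by simp, Set.finite_empty, fun hr' => absurd hr' hr⟩
  choose F hFS hFfin hFc using hRw
  -- for each x : X, pick a finite witnessing subset for (x,1) ~ h (v x)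
  have hXw : ∀ x : X, ∃ G ⊆ S, G.Finite ∧
      congClosure (free M X) (fun a b => (a, b) ∈ G) (x, 1) (h (v x)) := by
    intro x
    have : f (x, 1) = f (h (v x)) := by rw [hfh, hv]
    exact congClosure_compact (free M X) S ((hf_ker _ _).1 this)
  choose G hGS hGfin hGc using hXw
  -- the finite subpresentation
  refine ⟨(⋃ r ∈ R, F r) ∪ ⋃ x : X, G x, ?_, ?_, ?_⟩
  · apply Set.union_subset
    · exact Set.iUnion₂_subset fun r _ => hFS r
    · exact Set.iUnion_subset fun x => hGS x
  · exact ((hRfin.biUnion fun r _ => hFfin r).union (Set.finite_iUnion hGfin))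
  set S' : Set ((X × M) × (X × M)) := (⋃ r ∈ R, F r) ∪ ⋃ x : X, G x with hS'_def
  refine ⟨f, hf_surj, hf_hom, ?_⟩
  intro p q
  constructor
  · intro hpq
    -- p ~ h (k p) modulo S'
    have key : ∀ w : X × M,
        congClosure (free M X) (fun a b => (a, b) ∈ S') w (h (k w)) := by
      rintro ⟨x, m⟩
      have h1 : congClosure (free M X) (fun a b => (a, b) ∈ S') (x, 1) (h (v x)) :=
        congClosure_mono' _ (fun a b hab =>
          Set.mem_union_right _ (Set.mem_iUnion.2 ⟨x, hab⟩)) (hGc x)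
      have h2 := (congClosure_isCong (free M X)
        (fun a b => (a, b) ∈ S')).2 _ _ m h1
      have e1 : (free M X).act ((x, 1) : X × M) m = (x, m) := by simp [free]
      have e2 : (free M X).act (h (v x)) m = h (k (x, m)) := by
        have : k (x, m) = (free M Y).act (v x) m := rfl
        rw [this, hh_hom]
      rwa [e1, e2] at h2
    -- k p ~ k q modulo R, hence h (k p) ~ h (k q) modulo S'
    have hR' : congClosure (free M Y) (fun a b => (a, b) ∈ R) (k p) (k q) := by
      apply (hg_ker _ _).1
      rw [hgk, hgk, hpq]
    have hmid : congClosure (free M X) (fun a b => (a, b) ∈ S') (h (k p)) (h (k q)) := by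
      refine hR' (fun a b => congClosure (free M X) (fun a b => (a, b) ∈ S') (h a) (h b))
        (pullback_isCong _ _ h hh_hom _ (congClosure_isCong _ _)) ?_
      intro a b hab
      exact congClosure_mono' _ (fun c d hcd =>
        Set.mem_union_left _ (Set.mem_biUnion hab hcd)) (hFc (a, b) hab)
    have hE := (congClosure_isCong (free M X) (fun a b => (a, b) ∈ S')).1
    exact hE.trans (key p) (hE.trans hmid (hE.symm (key q)))
  · intro hpq
    refine hpq (fun a b => f a = f b) (ker_isCong _ α f hf_hom) ?_
    intro a b hab
    apply (hf_ker a b).2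
    apply le_congClosure'
    rcases hab with hab | hab
    · obtain ⟨r, hr, hmem⟩ := Set.mem_iUnion₂.1 hab
      exact hFS r hmem
    · obtain ⟨x, hx⟩ := Set.mem_iUnion.1 hab
      exact hGS x hx
end

section
/- Let M be a monoid and C = A ∪ B an M-act with A and B subacts such that A ∩ B is either empty or finitely generated. If C is finitely generated, then both A and B are finitely generated. -/
open RActOn in
/-- If `C = A ∪ B` with `A ∩ B` empty or finitely generated, and `C` is finitely
generated, then both `A` and `B` are finitely generated. -/
theorem components_fg_of_union_fg {M : Type*} [Monoid M] {C : Type*} (γ : RActOn M C)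
    (A B : Set C) (hA : IsSubact γ A) (hB : IsSubact γ B)
    (hunion : A ∪ B = Set.univ)
    (hint : A ∩ B = ∅ ∨ FGSet γ (A ∩ B))
    (hC : FinitelyGenerated γ) :
    FGSet γ A ∧ FGSet γ B := by
  obtain ⟨U, hUfin, hUgen⟩ := hC
  have key : ∀ (S T : Set C), IsSubact γ S → IsSubact γ T → S ∪ T = Set.univ →
      (S ∩ T = ∅ ∨ FGSet γ (S ∩ T)) → FGSet γ S := by
    intro S T hS hT hu hi
    rcases hi with he | ⟨V, hVsub, hVfin, hVgen⟩
    · refine ⟨U ∩ S, Set.inter_subset_right, hUfin.inter_of_left _, ?_⟩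
      intro a ha
      obtain ⟨u, huU, m, hm⟩ := hUgen a
      have huS : u ∈ S := by
        by_contra huS
        have huT : u ∈ T := by
          have h := Set.mem_univ u; rw [← hu] at h; exact h.resolve_left huS
        have hmem : a ∈ S ∩ T := ⟨ha, hm ▸ hT u huT m⟩
        rw [he] at hmem; simp at hmem
      exact ⟨u, ⟨huU, huS⟩, m, hm⟩
    · refine ⟨(U ∩ S) ∪ V, ?_, ?_, ?_⟩
      · exact Set.union_subset Set.inter_subset_right
          (hVsub.trans Set.inter_subset_left)
      · exact (hUfin.inter_of_left _).union hVfin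
      · intro a ha
        obtain ⟨u, huU, m, hm⟩ := hUgen a
        by_cases huS : u ∈ S
        · exact ⟨u, Or.inl ⟨huU, huS⟩, m, hm⟩
        · have huT : u ∈ T := by
            have h := Set.mem_univ u; rw [← hu] at h; exact h.resolve_left huS
          obtain ⟨v, hv, n, hn⟩ := hVgen a ⟨ha, hm ▸ hT u huT m⟩
          exact ⟨v, Or.inr hv, n, hn⟩
  exact ⟨key A B hA hB hunion hint,
    key B A hB hA (by rw [Set.union_comm]; exact hunion)
      (by rw [Set.inter_comm]; exact hint)⟩
end

section
/- Let M be a monoid and let A and B be disjoint M-acts. The disjoint union A ⊔ B is finitely presented if and only if both A and B are finitely presented. -/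
namespace DUFP
open RActOn

variable {M : Type*} [Monoid M]

theorem congClosure_isCong {A : Type*} (α : RActOn M A) (X : A → A → Prop) :
    IsCong α (congClosure α X) := by
  refine ⟨⟨?_, ?_, ?_⟩, ?_⟩
  · intro a ρ hρ _; exact hρ.1.refl a
  · intro a b h ρ hρ hX; exact hρ.1.symm (h ρ hρ hX)
  · intro a b c h1 h2 ρ hρ hX; exact hρ.1.trans (h1 ρ hρ hX) (h2 ρ hρ hX)
  · intro a b m h ρ hρ hX; exact hρ.2 a b m (h ρ hρ hX)

theorem congClosure_of_rel {A : Type*} (α : RActOn M A) (X : A → A → Prop) {a b : A}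
    (h : X a b) : congClosure α X a b := fun _ _ hX => hX a b h

theorem congClosure_congr {A : Type*} (α : RActOn M A) {X Y : A → A → Prop}
    (h : ∀ a b, X a b ↔ Y a b) (a b : A) :
    congClosure α X a b ↔ congClosure α Y a b := by
  constructor
  · intro H ρ hρ hY; exact H ρ hρ (fun x y hx => hY x y ((h x y).mp hx))
  · intro H ρ hρ hX; exact H ρ hρ (fun x y hy => hX x y ((h x y).mpr hy))

/-- The map on free acts induced by a map of generating sets. -/
def jmap {X' X : Type*} (j : X' → X) : X' × M → X × M := fun u => (j u.1, u.2)

theorem jmap_injective {X' X : Type*} {j : X' → X} (hj : Function.Injective j) :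
    Function.Injective (jmap (M := M) j) := by
  intro u v h
  have h1 := congrArg Prod.fst h
  have h2 := congrArg Prod.snd h
  exact Prod.ext (hj h1) h2

theorem jmap_act {X' X : Type*} (j : X' → X) (u : X' × M) (m : M) :
    (free M X).act (jmap j u) m = jmap j ((free M X').act u m) := rfl

/-- Master lemma: the congruence generated by a relation whose pairs respect the
image of `j` separates the image, and restricts to the pulled-back congruence. -/
theorem master {X' X : Type*} {j : X' → X} (hj : Function.Injective j)
    (R : Set ((X × M) × (X × M)))
    (hR : ∀ p ∈ R, ((p.1.1 ∈ Set.range j) ↔ (p.2.1 ∈ Set.range j))) :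
    (∀ a b : X × M, congClosure (free M X) (fun a b => (a, b) ∈ R) a b →
      ((a.1 ∈ Set.range j) ↔ (b.1 ∈ Set.range j))) ∧
    (∀ u v : X' × M,
      congClosure (free M X) (fun a b => (a, b) ∈ R) (jmap j u) (jmap j v) ↔
      congClosure (free M X') (fun u v => (jmap j u, jmap j v) ∈ R) u v) := by
  set closR := congClosure (free M X) (fun a b => (a, b) ∈ R) with hclosR
  set clos' := congClosure (free M X') (fun u v => (jmap j u, jmap j v) ∈ R) with hclos'
  have hcR := congClosure_isCong (free M X) (fun a b => (a, b) ∈ R)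
  have hc' := congClosure_isCong (free M X') (fun u v => (jmap j u, jmap j v) ∈ R)
  -- the separating congruence
  set ρ : X × M → X × M → Prop := fun a b =>
    (∃ u v : X' × M, a = jmap j u ∧ b = jmap j v ∧ clos' u v) ∨
    (a.1 ∉ Set.range j ∧ b.1 ∉ Set.range j ∧ closR a b) with hρdef
  have hρ : IsCong (free M X) ρ := by
    refine ⟨⟨?_, ?_, ?_⟩, ?_⟩
    · intro a
      by_cases h : a.1 ∈ Set.range j
      · obtain ⟨x', hx⟩ := h
        exact Or.inl ⟨(x', a.2), (x', a.2), Prod.ext hx.symm rfl, Prod.ext hx.symm rfl,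
          hc'.1.refl _⟩
      · exact Or.inr ⟨h, h, hcR.1.refl a⟩
    · rintro a b (⟨u, v, ha, hb, huv⟩ | ⟨ha, hb, hab⟩)
      · exact Or.inl ⟨v, u, hb, ha, hc'.1.symm huv⟩
      · exact Or.inr ⟨hb, ha, hcR.1.symm hab⟩
    · rintro a b c (⟨u, v, ha, hb, huv⟩ | ⟨ha, hb, hab⟩)
        (⟨u2, v2, hb2, hc2, huv2⟩ | ⟨hb2, hc2, hbc⟩)
      · have : v = u2 := jmap_injective hj (hb ▸ hb2)
        have huv2' : clos' v v2 := by rw [this]; exact huv2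
        exact Or.inl ⟨u, v2, ha, hc2, hc'.1.trans huv huv2'⟩
      · exact absurd ⟨v.1, (congrArg Prod.fst hb).symm⟩ hb2
      · exact absurd ⟨u2.1, (congrArg Prod.fst hb2).symm⟩ hb
      · exact Or.inr ⟨ha, hc2, hcR.1.trans hab hbc⟩
    · rintro a b m (⟨u, v, ha, hb, huv⟩ | ⟨ha, hb, hab⟩)
      · refine Or.inl ⟨(free M X').act u m, (free M X').act v m, ?_, ?_, hc'.2 _ _ m huv⟩
        · rw [ha]; rfl
        · rw [hb]; rfl
      · exact Or.inr ⟨ha, hb, hcR.2 a b m hab⟩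
  have hρR : ∀ a b : X × M, (a, b) ∈ R → ρ a b := by
    intro a b hab
    by_cases h : a.1 ∈ Set.range j
    · have h2 : b.1 ∈ Set.range j := (hR (a, b) hab).mp h
      obtain ⟨x', hx⟩ := h
      obtain ⟨y', hy⟩ := h2
      refine Or.inl ⟨(x', a.2), (y', b.2), Prod.ext hx.symm rfl, Prod.ext hy.symm rfl, ?_⟩
      apply congClosure_of_rel
      show (jmap j (x', a.2), jmap j (y', b.2)) ∈ R
      have e1 : jmap j (x', a.2) = a := Prod.ext hx rfl
      have e2 : jmap j (y', b.2) = b := Prod.ext hy rfl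
      rw [e1, e2]; exact hab
    · exact Or.inr ⟨h, fun hb => h ((hR (a, b) hab).mpr hb), congClosure_of_rel _ _ hab⟩
  have key : ∀ a b : X × M, closR a b → ρ a b := fun a b h => h ρ hρ hρR
  constructor
  · intro a b h
    rcases key a b h with ⟨u, v, ha, hb, _⟩ | ⟨ha, hb, _⟩
    · subst ha; subst hb; exact ⟨fun _ => ⟨v.1, rfl⟩, fun _ => ⟨u.1, rfl⟩⟩
    · exact ⟨fun h' => absurd h' ha, fun h' => absurd h' hb⟩
  · intro u v
    constructor
    · intro h
      rcases key _ _ h with ⟨u2, v2, ha, hb, huv⟩ | ⟨ha, _, _⟩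
      · have hu : u = u2 := jmap_injective hj ha
        have hv : v = v2 := jmap_injective hj hb
        rw [hu, hv]; exact huv
      · exact absurd ⟨u.1, rfl⟩ ha
    · intro h
      refine h (fun u v => closR (jmap j u) (jmap j v)) ⟨⟨?_, ?_, ?_⟩, ?_⟩ ?_
      · intro a; exact hcR.1.refl _
      · intro a b hab; exact hcR.1.symm hab
      · intro a b c h1 h2; exact hcR.1.trans h1 h2
      · intro a b m hab
        rw [← jmap_act, ← jmap_act]
        exact hcR.2 _ _ m hab
      · intro x y hxy; exact congClosure_of_rel _ _ hxy

theorem sumAct_isLeft {A B : Type*} (α : RActOn M A) (β : RActOn M B)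
    (s : A ⊕ B) (m : M) : ((sumAct α β).act s m).isLeft = s.isLeft := by
  cases s <;> rfl

theorem fp_of_iso {A B : Type*} {α : RActOn M A} {β : RActOn M B}
    (e : Isomorphic α β) (h : FinitelyPresented α) : FinitelyPresented β := by
  obtain ⟨e, he, hbij⟩ := e
  obtain ⟨X, hX, R, hRf, f, hs, hh, hr⟩ := h
  refine ⟨X, hX, R, hRf, e ∘ f, hbij.surjective.comp hs, ?_, ?_⟩
  · intro u m
    show e (f ((free M X).act u m)) = β.act (e (f u)) m
    rw [hh u m, he]
  · intro u v
    rw [← hr u v]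
    exact ⟨fun h => hbij.injective h, fun h => congrArg e h⟩

theorem sum_swap_iso {A B : Type*} (α : RActOn M A) (β : RActOn M B) :
    Isomorphic (sumAct α β) (sumAct β α) := by
  refine ⟨Sum.swap, ?_, ⟨Sum.swap_leftInverse.injective, Sum.swap_rightInverse.surjective⟩⟩
  intro a m; cases a <;> rfl

theorem fp_of_sum_left {A B : Type*} (α : RActOn M A) (β : RActOn M B)
    (h : FinitelyPresented (sumAct α β)) : FinitelyPresented α := by
  obtain ⟨X, hX, R, hRfin, f, hfs, hfh, hfr⟩ := h
  have hact : ∀ (x : X) (m : M), f (x, m) = (sumAct α β).act (f (x, 1)) m := by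
    intro x m
    have : (x, m) = (free M X).act (x, 1) m := by show (x,m) = (x, 1*m); rw [one_mul]
    rw [this, hfh]
  have hcomp : ∀ (x : X) (m : M), (f (x, m)).isLeft = (f (x, 1)).isLeft := by
    intro x m; rw [hact, sumAct_isLeft]
  set p : X → Prop := fun x => (f (x, 1)).isLeft = true with hp
  set j : {x // p x} → X := Subtype.val with hjd
  have hj : Function.Injective j := Subtype.val_injective
  have hrange : ∀ x : X, x ∈ Set.range j ↔ p x := by
    intro x
    constructor
    · rintro ⟨⟨x', hx'⟩, rfl⟩; exact hx'
    · intro hx; exact ⟨⟨x, hx⟩, rfl⟩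
  have hReq : ∀ q ∈ R, f q.1 = f q.2 := by
    intro q hq
    exact (hfr q.1 q.2).mpr (congClosure_of_rel _ _ (show (q.1, q.2) ∈ R from hq))
  have hRcond : ∀ q ∈ R, ((q.1.1 ∈ Set.range j) ↔ (q.2.1 ∈ Set.range j)) := by
    intro q hq
    rw [hrange, hrange]
    show (f (q.1.1, 1)).isLeft = true ↔ (f (q.2.1, 1)).isLeft = true
    rw [← hcomp q.1.1 q.1.2, ← hcomp q.2.1 q.2.2]
    have : (q.1.1, q.1.2) = q.1 := rfl
    rw [this, (show (q.2.1, q.2.2) = q.2 from rfl), hReq q hq]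
  obtain ⟨hsep, hiff⟩ := master hj R hRcond
  have hex : ∀ u : {x // p x} × M, ∃ a, f (jmap j u) = Sum.inl a := by
    intro u
    have h1 : (f (jmap j u)).isLeft = true := by
      show (f (u.1.1, u.2)).isLeft = true
      rw [hcomp]; exact u.1.2
    cases hfu : f (jmap j u) with
    | inl a => exact ⟨a, rfl⟩
    | inr b => rw [hfu] at h1; simp at h1
  choose fA hfA using hex
  refine ⟨{x // p x}, Subtype.finite, {q | (jmap j q.1, jmap j q.2) ∈ R}, ?_, fA, ?_, ?_, ?_⟩
  · -- finiteness of the pulled-back relation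
    have : {q : ({x // p x} × M) × ({x // p x} × M) | (jmap j q.1, jmap j q.2) ∈ R} =
        (fun q : ({x // p x} × M) × ({x // p x} × M) => (jmap j q.1, jmap j q.2)) ⁻¹' R :=
      rfl
    rw [this]
    apply Set.Finite.preimage _ hRfin
    intro a _ b _ hab
    have h1 := jmap_injective hj (congrArg Prod.fst hab)
    have h2 := jmap_injective hj (congrArg Prod.snd hab)
    exact Prod.ext h1 h2
  · -- surjectivity
    intro a
    obtain ⟨w, hw⟩ := hfs (Sum.inl a)
    have hpw : p w.1 := by
      show (f (w.1, 1)).isLeft = true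
      rw [← hcomp w.1 w.2]
      have : (w.1, w.2) = w := rfl
      rw [this, hw]; rfl
    refine ⟨(⟨w.1, hpw⟩, w.2), ?_⟩
    have := hfA (⟨w.1, hpw⟩, w.2)
    have hjw : jmap j ((⟨w.1, hpw⟩ : {x // p x}), w.2) = w := rfl
    rw [hjw, hw] at this
    exact (Sum.inl_injective this).symm
  · -- homomorphism
    intro u m
    apply Sum.inl_injective
    rw [← hfA]
    have h1 : jmap j ((free M {x // p x}).act u m) = (free M X).act (jmap j u) m := rfl
    rw [h1, hfh, hfA]
    rfl
  · -- relations
    intro u v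
    show fA u = fA v ↔
      congClosure (free M {x // p x}) (fun u v => (jmap j u, jmap j v) ∈ R) u v
    rw [← hiff u v, ← hfr (jmap j u) (jmap j v)]
    constructor
    · intro h; rw [hfA, hfA, h]
    · intro h
      apply Sum.inl_injective
      rw [← hfA, ← hfA]
      exact h

theorem fp_sum {A B : Type*} {α : RActOn M A} {β : RActOn M B}
    (ha : FinitelyPresented α) (hb : FinitelyPresented β) :
    FinitelyPresented (sumAct α β) := by
  obtain ⟨X, hX, R, hRfin, f, hfs, hfh, hfr⟩ := ha
  obtain ⟨Y, hY, S, hSfin, g, hgs, hgh, hgr⟩ := hb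
  have hinl : Function.Injective (jmap (Sum.inl : X → X ⊕ Y) : X × M → (X ⊕ Y) × M) :=
    jmap_injective Sum.inl_injective
  have hinr : Function.Injective (jmap (Sum.inr : Y → X ⊕ Y) : Y × M → (X ⊕ Y) × M) :=
    jmap_injective Sum.inr_injective
  set T : Set (((X ⊕ Y) × M) × ((X ⊕ Y) × M)) :=
    (fun q : (X × M) × (X × M) => (jmap Sum.inl q.1, jmap Sum.inl q.2)) '' R ∪
    (fun q : (Y × M) × (Y × M) => (jmap Sum.inr q.1, jmap Sum.inr q.2)) '' S with hT
  have hTfin : T.Finite := (hRfin.image _).union (hSfin.image _)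
  set h : (X ⊕ Y) × M → A ⊕ B := fun u =>
    Sum.elim (fun x => Sum.inl (f (x, u.2))) (fun y => Sum.inr (g (y, u.2))) u.1 with hhd
  -- component condition for T with respect to inl
  have hTcondL : ∀ q ∈ T, ((q.1.1 ∈ Set.range (Sum.inl : X → X ⊕ Y)) ↔
      (q.2.1 ∈ Set.range (Sum.inl : X → X ⊕ Y))) := by
    rintro q (⟨r, _, rfl⟩ | ⟨s, _, rfl⟩)
    · exact ⟨fun _ => ⟨r.2.1, rfl⟩, fun _ => ⟨r.1.1, rfl⟩⟩
    · constructor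
      · rintro ⟨x, hx⟩; exact absurd hx (by simp [jmap])
      · rintro ⟨x, hx⟩; exact absurd hx (by simp [jmap])
  have hTcondR : ∀ q ∈ T, ((q.1.1 ∈ Set.range (Sum.inr : Y → X ⊕ Y)) ↔
      (q.2.1 ∈ Set.range (Sum.inr : Y → X ⊕ Y))) := by
    rintro q (⟨r, _, rfl⟩ | ⟨s, _, rfl⟩)
    · constructor
      · rintro ⟨y, hy⟩; exact absurd hy (by simp [jmap])
      · rintro ⟨y, hy⟩; exact absurd hy (by simp [jmap])
    · exact ⟨fun _ => ⟨s.2.1, rfl⟩, fun _ => ⟨s.1.1, rfl⟩⟩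
  obtain ⟨hsepL, hiffL⟩ := master Sum.inl_injective T hTcondL
  obtain ⟨hsepR, hiffR⟩ := master Sum.inr_injective T hTcondR
  -- pulled back relations agree with R and S
  have hTl : ∀ u v : X × M, (jmap Sum.inl u, jmap Sum.inl v) ∈ T ↔ (u, v) ∈ R := by
    intro u v
    constructor
    · rintro (⟨r, hr, heq⟩ | ⟨s, _, heq⟩)
      · have h1 : r.1 = u := hinl (congrArg Prod.fst heq)
        have h2 : r.2 = v := hinl (congrArg Prod.snd heq)
        rw [← h1, ← h2]; exact hr
      · have := congrArg (fun q => q.1.1) heq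
        exact absurd this (by simp [jmap])
    · intro hr; exact Or.inl ⟨(u, v), hr, rfl⟩
  have hTr : ∀ u v : Y × M, (jmap Sum.inr u, jmap Sum.inr v) ∈ T ↔ (u, v) ∈ S := by
    intro u v
    constructor
    · rintro (⟨r, _, heq⟩ | ⟨s, hs, heq⟩)
      · have := congrArg (fun q => q.1.1) heq
        exact absurd this (by simp [jmap])
      · have h1 : s.1 = u := hinr (congrArg Prod.fst heq)
        have h2 : s.2 = v := hinr (congrArg Prod.snd heq)
        rw [← h1, ← h2]; exact hs
    · intro hs; exact Or.inr ⟨(u, v), hs, rfl⟩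
  refine ⟨X ⊕ Y, inferInstance, T, hTfin, h, ?_, ?_, ?_⟩
  · -- surjective
    rintro (a | b)
    · obtain ⟨u, hu⟩ := hfs a
      exact ⟨(Sum.inl u.1, u.2), by simp [hhd, hu]⟩
    · obtain ⟨u, hu⟩ := hgs b
      exact ⟨(Sum.inr u.1, u.2), by simp [hhd, hu]⟩
  · -- hom
    rintro ⟨z, m0⟩ m
    cases z with
    | inl x =>
      show Sum.inl (f (x, m0 * m)) = (sumAct α β).act (Sum.inl (f (x, m0))) m
      have : (x, m0 * m) = (free M X).act (x, m0) m := rfl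
      rw [this, hfh]; rfl
    | inr y =>
      show Sum.inr (g (y, m0 * m)) = (sumAct α β).act (Sum.inr (g (y, m0))) m
      have : (y, m0 * m) = (free M Y).act (y, m0) m := rfl
      rw [this, hgh]; rfl
  · -- relations
    rintro ⟨z1, m1⟩ ⟨z2, m2⟩
    cases z1 with
    | inl x1 =>
      cases z2 with
      | inl x2 =>
        have e1 : ((Sum.inl x1 : X ⊕ Y), m1) = jmap Sum.inl (x1, m1) := rfl
        have e2 : ((Sum.inl x2 : X ⊕ Y), m2) = jmap Sum.inl (x2, m2) := rfl
        rw [e1, e2, hiffL,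
          congClosure_congr (free M X) (fun a b => hTl a b) (x1, m1) (x2, m2),
          ← hfr]
        show Sum.inl (f (x1, m1)) = Sum.inl (f (x2, m2)) ↔ _
        exact ⟨fun hh => Sum.inl_injective hh, fun hh => congrArg _ hh⟩
      | inr y2 =>
        constructor
        · intro hc; exact absurd hc (by simp [hhd])
        · intro hc
          have := hsepL _ _ hc
          have h1 : (Sum.inl x1 : X ⊕ Y) ∈ Set.range (Sum.inl : X → X ⊕ Y) := ⟨x1, rfl⟩
          have h2 := this.mp h1
          exact absurd h2 (by simp)
    | inr y1 =>
      cases z2 with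
      | inl x2 =>
        constructor
        · intro hc; exact absurd hc (by simp [hhd])
        · intro hc
          have := hsepL _ _ hc
          have h1 : (Sum.inl x2 : X ⊕ Y) ∈ Set.range (Sum.inl : X → X ⊕ Y) := ⟨x2, rfl⟩
          have h2 := this.mpr h1
          exact absurd h2 (by simp)
      | inr y2 =>
        have e1 : ((Sum.inr y1 : X ⊕ Y), m1) = jmap Sum.inr (y1, m1) := rfl
        have e2 : ((Sum.inr y2 : X ⊕ Y), m2) = jmap Sum.inr (y2, m2) := rfl
        rw [e1, e2, hiffR,
          congClosure_congr (free M Y) (fun a b => hTr a b) (y1, m1) (y2, m2),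
          ← hgr]
        show Sum.inr (g (y1, m1)) = Sum.inr (g (y2, m2)) ↔ _
        exact ⟨fun hh => Sum.inr_injective hh, fun hh => congrArg _ hh⟩

end DUFP



open RActOn in
/-- The disjoint union of two `M`-acts is finitely presented iff both
components are finitely presented. -/
theorem disjoint_union_fp_iff {M : Type*} [Monoid M] {A B : Type*}
    (α : RActOn M A) (β : RActOn M B) :
    FinitelyPresented (sumAct α β) ↔ FinitelyPresented α ∧ FinitelyPresented β := by
  constructor
  · intro h
    exact ⟨DUFP.fp_of_sum_left α β h,
      DUFP.fp_of_sum_left β α (DUFP.fp_of_iso (DUFP.sum_swap_iso α β) h)⟩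
  · rintro ⟨ha, hb⟩
    exact DUFP.fp_sum ha hb
end

section
/- Let M be a monoid and C = A ∪ B an M-act with A, B subacts and A ∩ B nonempty. If C is finitely presented and A and B are finitely generated, then A ∩ B is a finitely generated M-act. -/
section IntersectionFGAux

open RActOn

variable {M : Type*} [Monoid M]

/-- One elementary step with respect to a set of defining relations. -/
def RStep {X : Type*} (R : Set ((X × M) × (X × M))) (u v : X × M) : Prop :=
  ∃ p q t, ((p, q) ∈ R ∨ (q, p) ∈ R) ∧ u = (free M X).act p t ∧ v = (free M X).act q t

lemma RStep.symm' {X : Type*} {R : Set ((X × M) × (X × M))} {u v : X × M}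
    (h : RStep R u v) : RStep R v u := by
  obtain ⟨p, q, t, hpq, hu, hv⟩ := h
  exact ⟨q, p, t, hpq.symm, hv, hu⟩

lemma rchain_symm {X : Type*} {R : Set ((X × M) × (X × M))} {u v : X × M}
    (h : Relation.ReflTransGen (RStep R) u v) : Relation.ReflTransGen (RStep R) v u := by
  induction h with
  | refl => exact .refl
  | tail _ hstep ih => exact .trans (.single hstep.symm') ih

lemma rchain_act {X : Type*} {R : Set ((X × M) × (X × M))} {u v : X × M} (m : M)
    (h : Relation.ReflTransGen (RStep R) u v) :
    Relation.ReflTransGen (RStep R) ((free M X).act u m) ((free M X).act v m) := by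
  induction h with
  | refl => exact .refl
  | tail _ hstep ih =>
      refine ih.tail ?_
      obtain ⟨p, q, t, hpq, hu, hv⟩ := hstep
      exact ⟨p, q, t * m, hpq, by rw [hu, (free M X).act_mul],
        by rw [hv, (free M X).act_mul]⟩

lemma congClosure_le_rchain {X : Type*} {R : Set ((X × M) × (X × M))} {u v : X × M}
    (h : congClosure (free M X) (fun a b => (a, b) ∈ R) u v) :
    Relation.ReflTransGen (RStep R) u v := by
  refine h _ ⟨⟨fun _ => .refl, rchain_symm, Relation.ReflTransGen.trans⟩,
    fun a b m hab => rchain_act m hab⟩ ?_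
  intro x y hxy
  exact .single ⟨x, y, 1, Or.inl hxy, ((free M X).act_one x).symm,
    ((free M X).act_one y).symm⟩

end IntersectionFGAux

open RActOn in
/-- If `C = A ∪ B` is finitely presented with `A`, `B` finitely generated subacts
and `A ∩ B` nonempty, then `A ∩ B` is finitely generated. -/
theorem intersection_fg {M : Type*} [Monoid M] {C : Type*} (γ : RActOn M C)
    (A B : Set C) (hA : IsSubact γ A) (hB : IsSubact γ B)
    (hunion : A ∪ B = Set.univ) (hint : (A ∩ B).Nonempty)
    (hC : FinitelyPresented γ) (hAfg : FGSet γ A) (hBfg : FGSet γ B) :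
    FGSet γ (A ∩ B) := by
  classical
  obtain ⟨X, hXfin, R, hRfin, f, hfsurj, hfhom, hfker⟩ := hC
  obtain ⟨U, hUA, hUfin, hUgen⟩ := hAfg
  obtain ⟨V, hVB, hVfin, hVgen⟩ := hBfg
  have hUsub : Finite ↥U := hUfin.to_subtype
  have hVsub : Finite ↥V := hVfin.to_subtype
  choose z hz using hfsurj
  -- the extended alphabet
  set X' := X ⊕ (↥U ⊕ ↥V) with hX'def
  let rt : X' → C := Sum.elim (fun x => f (x, 1)) (Sum.elim (fun u => ↑u) (fun v => ↑v))
  let f' : X' × M → C := fun p => γ.act (rt p.1) p.2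
  let ι : X × M → X' × M := fun p => (Sum.inl p.1, p.2)
  let R' : Set ((X' × M) × (X' × M)) :=
    ((fun pq : (X × M) × (X × M) => (ι pq.1, ι pq.2)) '' R) ∪
    (Set.range (fun u : ↥U => (((Sum.inr (Sum.inl u) : X'), (1 : M)), ι (z ↑u)))) ∪
    (Set.range (fun v : ↥V => (((Sum.inr (Sum.inr v) : X'), (1 : M)), ι (z ↑v))))
  have hf'ι : ∀ p : X × M, f' (ι p) = f p := by
    intro p
    have h1 : (free M X).act (p.1, 1) p.2 = p := by simp [free]
    have := hfhom (p.1, 1) p.2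
    rw [h1] at this
    simpa [f', ι, rt] using this.symm
  have hRcc : ∀ pq ∈ R, f pq.1 = f pq.2 := by
    intro pq hpq
    exact (hfker pq.1 pq.2).mpr (fun ρ hρ hsub => hsub _ _ hpq)
  have hf'R' : ∀ pq ∈ R', f' pq.1 = f' pq.2 := by
    rintro pq ((hpq | hpq) | hpq)
    · obtain ⟨ab, hab, rfl⟩ := hpq
      rw [hf'ι, hf'ι]
      exact hRcc ab hab
    · obtain ⟨u, rfl⟩ := hpq
      rw [hf'ι]
      simp only [f', rt, Sum.elim_inr, Sum.elim_inl]
      rw [γ.act_one, hz]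
    · obtain ⟨v, rfl⟩ := hpq
      rw [hf'ι]
      simp only [f', rt, Sum.elim_inr]
      rw [γ.act_one, hz]
  have hf'act : ∀ (p : X' × M) (t : M), f' ((free M X').act p t) = γ.act (f' p) t := by
    intro p t
    simp only [f', free]
    exact γ.act_mul _ _ _
  have hstepf' : ∀ {w w₁ : X' × M}, RStep R' w w₁ → f' w = f' w₁ := by
    rintro w w₁ ⟨p, q, t, hpq, rfl, rfl⟩
    rw [hf'act, hf'act]
    rcases hpq with h | h
    · rw [hf'R' (p, q) h]
    · rw [← hf'R' (q, p) h]
  -- every element of the extended free act is chain-connected to one in the image of ι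
  have hbase : ∀ w : X' × M, ∃ w₀ : X × M,
      Relation.ReflTransGen (RStep R') w (ι w₀) ∧ f w₀ = f' w := by
    rintro ⟨x', m⟩
    rcases x' with x | u | v
    · exact ⟨(x, m), .refl, (hf'ι (x, m)).symm⟩
    · refine ⟨(free M X).act (z ↑u) m, .single ?_, ?_⟩
      · refine ⟨((Sum.inr (Sum.inl u) : X'), (1 : M)), ι (z ↑u), m,
          Or.inl (Or.inl (Or.inr ⟨u, rfl⟩)), ?_, ?_⟩
        · simp [free]
        · simp [ι, free]
      · rw [hfhom, hz]
        simp [f', rt]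
    · refine ⟨(free M X).act (z ↑v) m, .single ?_, ?_⟩
      · refine ⟨((Sum.inr (Sum.inr v) : X'), (1 : M)), ι (z ↑v), m,
          Or.inl (Or.inr ⟨v, rfl⟩), ?_, ?_⟩
        · simp [free]
        · simp [ι, free]
      · rw [hfhom, hz]
        simp [f', rt]
  have hιstep : ∀ {a b : X × M}, RStep R a b → RStep R' (ι a) (ι b) := by
    rintro a b ⟨p, q, t, hpq, rfl, rfl⟩
    refine ⟨ι p, ι q, t, ?_, by simp [ι, free], by simp [ι, free]⟩
    rcases hpq with h | h
    · exact Or.inl (Or.inl (Or.inl ⟨(p, q), h, rfl⟩))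
    · exact Or.inr (Or.inl (Or.inl ⟨(q, p), h, rfl⟩))
  have hker' : ∀ w w' : X' × M, f' w = f' w' →
      Relation.ReflTransGen (RStep R') w w' := by
    intro w w' heq
    obtain ⟨w₀, hc₀, hf₀⟩ := hbase w
    obtain ⟨w₀', hc₀', hf₀'⟩ := hbase w'
    have hff : f w₀ = f w₀' := by rw [hf₀, hf₀', heq]
    have hcc := congClosure_le_rchain ((hfker w₀ w₀').mp hff)
    have hcc' : Relation.ReflTransGen (RStep R') (ι w₀) (ι w₀') :=
      Relation.ReflTransGen.lift ι (fun a b h => hιstep h) _ _ hcc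
    exact (hc₀.trans hcc').trans (rchain_symm hc₀')
  -- finiteness of R'
  have hR'fin : R'.Finite := by
    refine ((hRfin.image _).union (Set.finite_range _)).union (Set.finite_range _)
  -- the generating set
  let G : Set C := (A ∩ B) ∩ (Set.range rt ∪ (fun pq : (X' × M) × (X' × M) => f' pq.1) '' R')
  have hGfin : G.Finite :=
    Set.Finite.inter_of_right ((Set.finite_range rt).union (hR'fin.image _)) _
  have hGsub : G ⊆ A ∩ B := fun g hg => hg.1
  -- the key lemma
  have key : ∀ (c : C), c ∈ A ∩ B → ∀ (w' : X' × M), rt w'.1 ∈ B →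
      ∀ (w : X' × M), Relation.ReflTransGen (RStep R') w w' →
      f' w = c → rt w.1 ∈ A → ∃ g ∈ G, ∃ t, γ.act g t = c := by
    intro c hcAB w' hw'B w hchain
    induction hchain using Relation.ReflTransGen.head_induction_on with
    | refl =>
        intro hfc hwA
        refine ⟨rt w'.1, ⟨⟨hwA, hw'B⟩, Or.inl ⟨w'.1, rfl⟩⟩, w'.2, hfc⟩
    | head hstep hchain ih =>
        rename_i a b
        intro hfc haA
        have hfb : f' b = c := by rw [← hstepf' hstep]; exact hfc
        by_cases hbA : rt b.1 ∈ A
        · exact ih hfb hbA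
        · have hbB : rt b.1 ∈ B := by
            have : rt b.1 ∈ A ∪ B := by rw [hunion]; trivial
            exact this.resolve_left hbA
          obtain ⟨p, q, t, hpq, ha', hb'⟩ := hstep
          have hp1 : a.1 = p.1 := by rw [ha']; rfl
          have hq1 : b.1 = q.1 := by rw [hb']; rfl
          have hfpA : f' p ∈ A := hA _ (hp1 ▸ haA) p.2
          have hfqB : f' q ∈ B := hB _ (hq1 ▸ hbB) q.2
          have hfpq : f' p = f' q := by
            rcases hpq with h | h
            · exact hf'R' (p, q) h
            · exact (hf'R' (q, p) h).symm
          have hgG : f' p ∈ G := by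
            refine ⟨⟨hfpA, hfpq ▸ hfqB⟩, Or.inr ?_⟩
            rcases hpq with h | h
            · exact ⟨(p, q), h, rfl⟩
            · exact ⟨(q, p), h, hfpq.symm⟩
          refine ⟨f' p, hgG, t, ?_⟩
          rw [← hf'act, ← ha', hfc]
  refine ⟨G, hGsub, hGfin, ?_⟩
  intro c hc
  obtain ⟨u, hu, m, hum⟩ := hUgen c hc.1
  obtain ⟨v, hv, n, hvn⟩ := hVgen c hc.2
  have heq : f' ((Sum.inr (Sum.inl ⟨u, hu⟩) : X'), m) = f' ((Sum.inr (Sum.inr ⟨v, hv⟩) : X'), n) := by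
    simp only [f', rt, Sum.elim_inr, Sum.elim_inl]
    rw [hum, hvn]
  exact key c hc ((Sum.inr (Sum.inr ⟨v, hv⟩) : X'), n) (by simpa [rt] using hVB hv)
    ((Sum.inr (Sum.inl ⟨u, hu⟩) : X'), m) (hker' _ _ heq)
    (by simpa [f', rt] using hum) (by simpa [rt] using hUA hu)
end

section
/- Let M be a monoid generated by a set Z, let A be an M-act generated by a set X, and let B be a subact of A. Define S = {am : a ∈ A \ B, m ∈ Z, am ∈ B}. Then B is generated as an M-act by (X ∩ B) ∪ S. -/
open RActOn in
private lemma list_lemma {M : Type*} [Monoid M] {A : Type*} (α : RActOn M A)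
    (Z : Set M) (B : Set A) :
    ∀ l : List M, (∀ z ∈ l, z ∈ Z) → ∀ a, a ∉ B → α.act a l.prod ∈ B →
      ∃ u ∈ {c | c ∈ B ∧ ∃ a ∉ B, ∃ m ∈ Z, α.act a m = c}, ∃ n : M,
        α.act u n = α.act a l.prod := by
  intro l
  induction l with
  | nil =>
    intro _ a ha hb
    simp [α.act_one] at hb
    exact absurd hb ha
  | cons z t ih =>
    intro hl a ha hb
    have key : α.act a (z :: t).prod = α.act (α.act a z) t.prod := by
      simp [List.prod_cons, α.act_mul]
    by_cases h : α.act a z ∈ B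
    · refine ⟨α.act a z, ⟨h, a, ha, z, hl z (by simp), rfl⟩, t.prod, key.symm⟩
    · rw [key] at hb ⊢
      exact ih (fun w hw => hl w (by simp [hw])) _ h hb

open RActOn in
/-- If `Z` generates `M`, `X` generates `A` and `B` is a subact of `A`, then `B` is
generated by `(X ∩ B) ∪ S` where `S = {am ∈ B : a ∈ A \\ B, m ∈ Z}`. -/
theorem subact_generating_set {M : Type*} [Monoid M] {A : Type*} (α : RActOn M A)
    (Z : Set M) (hZ : Submonoid.closure Z = ⊤)
    (X : Set A) (hX : ∀ a : A, ∃ x ∈ X, ∃ m : M, α.act x m = a)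
    (B : Set A) (hB : IsSubact α B) :
    ∀ b ∈ B, ∃ u ∈ (X ∩ B) ∪ {c | c ∈ B ∧ ∃ a ∉ B, ∃ m ∈ Z, α.act a m = c},
      ∃ m : M, α.act u m = b := by
  intro b hb
  obtain ⟨x, hx, m, hm⟩ := hX b
  by_cases hxB : x ∈ B
  · exact ⟨x, Or.inl ⟨hx, hxB⟩, m, hm⟩
  · have hmem : m ∈ Submonoid.closure Z := by rw [hZ]; trivial
    obtain ⟨l, hlZ, hlp⟩ := Submonoid.exists_list_of_mem_closure hmem
    subst hlp
    obtain ⟨u, hu, n, hn⟩ := list_lemma α Z B l hlZ x hxB (hm ▸ hb)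
    exact ⟨u, Or.inr hu, n, hn.trans hm⟩
end

section
/- Let M be a finitely generated monoid, A a finitely generated M-act, and B a subact of A with A \ B finite. Then B is finitely generated. -/
open RActOn in
/-- For a finitely generated monoid `M`, a large subact (finite complement) of a
finitely generated `M`-act is finitely generated. -/
theorem large_subact_fg {M : Type*} [Monoid M]
    (hM : ∃ Z : Set M, Z.Finite ∧ Submonoid.closure Z = ⊤)
    {A : Type*} (α : RActOn M A) (hA : FinitelyGenerated α)
    (B : Set A) (hB : IsSubact α B) (hlarge : (Bᶜ : Set A).Finite) :
    FGSet α B := by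
  obtain ⟨Z, hZfin, hZcl⟩ := hM
  obtain ⟨U, hUfin, hUgen⟩ := hA
  set W : Set A := {x | x ∈ B ∧ ∃ c ∉ B, ∃ z ∈ Z, α.act c z = x} with hW
  have hWfin : W.Finite := by
    apply ((hlarge.prod hZfin).image (fun p : A × M => α.act p.1 p.2)).subset
    rintro x ⟨-, c, hc, z, hz, rfl⟩
    exact ⟨(c, z), ⟨hc, hz⟩, rfl⟩
  have key : ∀ l : List M, (∀ z ∈ l, z ∈ Z) → ∀ a, α.act a l.prod ∈ B →
      a ∈ B ∨ ∃ w ∈ W, ∃ m, α.act w m = α.act a l.prod := by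
    intro l
    induction l with
    | nil =>
      intro _ a ha
      left; simpa [α.act_one] using ha
    | cons z l ih =>
      intro hmem a ha
      have hprod : α.act a (z :: l).prod = α.act (α.act a z) l.prod := by
        simp [List.prod_cons, α.act_mul]
      rw [hprod] at ha
      rcases ih (fun x hx => hmem x (List.mem_cons_of_mem _ hx)) (α.act a z) ha with
        h | ⟨w, hw, m, hm⟩
      · by_cases haB : a ∈ B
        · exact Or.inl haB
        · exact Or.inr ⟨α.act a z, ⟨h, a, haB, z, hmem z List.mem_cons_self, rfl⟩,
            l.prod, by rw [hprod]⟩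
      · exact Or.inr ⟨w, hw, m, by rw [hprod]; exact hm⟩
  refine ⟨(U ∩ B) ∪ W, ?_, (hUfin.inter_of_left B).union hWfin, ?_⟩
  · rintro x (⟨-, hx⟩ | ⟨hx, -⟩) <;> exact hx
  · intro b hb
    obtain ⟨u, hu, m, hum⟩ := hUgen b
    obtain ⟨l, hlZ, hlprod⟩ := Submonoid.exists_list_of_mem_closure
      (s := Z) (x := m) (by rw [hZcl]; trivial)
    have hbl : α.act u l.prod ∈ B := by rw [hlprod, hum]; exact hb
    rcases key l hlZ u hbl with h | ⟨w, hw, n, hn⟩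
    · exact ⟨u, Or.inl ⟨hu, h⟩, m, hum⟩
    · exact ⟨w, Or.inr hw, n, by rw [hn, hlprod, hum]⟩
end
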